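/- The closed unit ball of the norm ‖(x,y)‖_f = inf { ‖x−w‖ + ‖y + f w‖ + ε‖w‖ : w ∈ X } on X × Y equals the closed convex hull of (B_X × {0}) ∪ ({0} × B_Y) ∪ G, where G = { (w, −f w) : ‖w‖ ≤ ε⁻¹ }. -/

import Mathlib

/-- the closed unit ball of ‖·‖_f equals the closed convex hull of
(B_X × {0}) ∪ ({0} × B_Y) ∪ G, where G = { (w, −f w) : ‖w‖ ≤ ε⁻¹ }. -/
theorem stmt_5 {X Y : Type*} [NormedAddCommGroup X] [NormedSpace ℝ X]
    [NormedAddCommGroup Y] [NormedSpace ℝ Y]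
    (ε : ℝ) (hε0 : 0 < ε) (hε1 : ε < 1)
    (f : X →ₗ[ℝ] Y) (hf1 : ∀ x, ‖f x‖ ≤ ‖x‖)
    (hf2 : ∀ x, (1 - ε) * ‖x‖ ≤ ‖f x‖)
    (N : X × Y → ℝ)
    (hN : N = fun p => sInf {r : ℝ | ∃ w : X, r = ‖p.1 - w‖ + ‖p.2 + f w‖ + ε * ‖w‖}) :
    {p : X × Y | N p ≤ 1} =
      closure (convexHull ℝ
        (((fun x : X => ((x, (0 : Y)) : X × Y)) '' Metric.closedBall 0 1) ∪
         ((fun y : Y => (((0 : X), y) : X × Y)) '' Metric.closedBall 0 1) ∪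
         {p : X × Y | ∃ w : X, ‖w‖ ≤ ε⁻¹ ∧ p = (w, -f w)})) := by
  set T : X × Y → Set ℝ :=
    fun p => {r : ℝ | ∃ w : X, r = ‖p.1 - w‖ + ‖p.2 + f w‖ + ε * ‖w‖} with hT
  have hNT : ∀ p, N p = sInf (T p) := fun p => by rw [hN]
  have hTmem : ∀ (p : X × Y) (r : ℝ),
      r ∈ T p ↔ ∃ w : X, r = ‖p.1 - w‖ + ‖p.2 + f w‖ + ε * ‖w‖ := fun p r => Iff.rfl
  have hTne : ∀ p : X × Y, (T p).Nonempty :=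
    fun p => ⟨‖p.1 - 0‖ + ‖p.2 + f 0‖ + ε * ‖(0 : X)‖, ⟨0, rfl⟩⟩
  have hTbdd : ∀ p : X × Y, BddBelow (T p) := by
    intro p
    refine ⟨0, ?_⟩
    rintro r ⟨w, rfl⟩
    positivity
  have hNle : ∀ (p : X × Y) (w : X), N p ≤ ‖p.1 - w‖ + ‖p.2 + f w‖ + ε * ‖w‖ := by
    intro p w
    rw [hNT p]
    exact csInf_le (hTbdd p) ⟨w, rfl⟩
  set S : Set (X × Y) :=
      (((fun x : X => ((x, (0 : Y)) : X × Y)) '' Metric.closedBall 0 1) ∪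
       ((fun y : Y => (((0 : X), y) : X × Y)) '' Metric.closedBall 0 1) ∪
       {p : X × Y | ∃ w : X, ‖w‖ ≤ ε⁻¹ ∧ p = (w, -f w)}) with hS
  -- every point with N p < 1 lies in the convex hull of S
  have hullA : ∀ p : X × Y, N p < 1 → p ∈ convexHull ℝ S := by
    intro p hp
    rw [hNT p] at hp
    obtain ⟨r, hrT, hr⟩ := exists_lt_of_csInf_lt (hTne p) hp
    rw [hTmem] at hrT
    obtain ⟨w, rfl⟩ := hrT
    set a := ‖p.1 - w‖ with ha
    set b := ‖p.2 + f w‖ with hb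
    set c := ε * ‖w‖ with hc
    have ha0 : 0 ≤ a := norm_nonneg _
    have hb0 : 0 ≤ b := norm_nonneg _
    have hc0 : 0 ≤ c := by rw [hc]; positivity
    set u : X × Y := (a⁻¹ • (p.1 - w), 0) with hu
    set v : X × Y := ((0 : X), b⁻¹ • (p.2 + f w)) with hv
    set g : X × Y := (c⁻¹ • w, -f (c⁻¹ • w)) with hg
    have h1 : a • (a⁻¹ • (p.1 - w)) = p.1 - w := by
      rcases eq_or_ne a 0 with h | h
      · rw [ha, norm_eq_zero] at h
        simp [h]
      · rw [smul_inv_smul₀ h]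
    have h2 : b • (b⁻¹ • (p.2 + f w)) = p.2 + f w := by
      rcases eq_or_ne b 0 with h | h
      · rw [hb, norm_eq_zero] at h
        simp [h]
      · rw [smul_inv_smul₀ h]
    have hw0 : c = 0 → w = 0 := by
      intro h
      rw [hc, mul_eq_zero] at h
      rcases h with h | h
      · exact absurd h (ne_of_gt hε0)
      · rwa [norm_eq_zero] at h
    have h3 : c • (c⁻¹ • w) = w := by
      rcases eq_or_ne c 0 with h | h
      · simp [hw0 h]
      · rw [smul_inv_smul₀ h]
    have h4 : c • (f (c⁻¹ • w)) = f w := by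
      rw [← map_smul, h3]
    have hu_mem : u ∈ S := by
      rw [hS]
      left; left
      refine ⟨a⁻¹ • (p.1 - w), ?_, rfl⟩
      rw [Metric.mem_closedBall, dist_zero_right, norm_smul, Real.norm_eq_abs, abs_inv,
        abs_of_nonneg ha0, ← ha]
      rcases eq_or_ne a 0 with h | h
      · simp [h]
      · rw [inv_mul_cancel₀ h]
    have hv_mem : v ∈ S := by
      rw [hS]
      left; right
      refine ⟨b⁻¹ • (p.2 + f w), ?_, rfl⟩
      rw [Metric.mem_closedBall, dist_zero_right, norm_smul, Real.norm_eq_abs, abs_inv,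
        abs_of_nonneg hb0, ← hb]
      rcases eq_or_ne b 0 with h | h
      · simp [h]
      · rw [inv_mul_cancel₀ h]
    have hg_mem : g ∈ S := by
      rw [hS]
      right
      refine ⟨c⁻¹ • w, ?_, rfl⟩
      rw [norm_smul, Real.norm_eq_abs, abs_inv, abs_of_nonneg hc0]
      rcases eq_or_ne w 0 with h | h
      · simp [h]
        positivity
      · rw [hc, mul_inv, mul_assoc, inv_mul_cancel₀ (norm_ne_zero_iff.mpr h), mul_one]
    have h0_mem : (0 : X × Y) ∈ S := by
      rw [hS]
      left; left
      exact ⟨0, by simp, by simp⟩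
    have h4' : c • (-f (c⁻¹ • w)) = -f w := by rw [smul_neg, h4]
    have key : a • u + b • v + c • g + (1 - (a + b + c)) • (0 : X × Y) = p := by
      refine Prod.ext ?_ ?_
      · simp only [Prod.fst_add, Prod.smul_fst, hu, hv, hg, Prod.fst_zero, smul_zero, h1, h3]
        abel
      · simp only [Prod.snd_add, Prod.smul_snd, hu, hv, hg, Prod.snd_zero, smul_zero, h2, h4']
        abel
    have hmem : (∑ i : Fin 4,
        (![a, b, c, 1 - (a + b + c)] i) • (![u, v, g, (0 : X × Y)] i)) ∈ convexHull ℝ S := by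
      apply (convex_convexHull ℝ S).sum_mem
      · intro i _
        fin_cases i
        · simpa using ha0
        · simpa using hb0
        · simpa using hc0
        · show (0:ℝ) ≤ 1 - (a + b + c)
          linarith
      · rw [Fin.sum_univ_four]
        simp only [Matrix.cons_val_zero, Matrix.cons_val_one, Matrix.head_cons,
          Matrix.cons_val_two, Matrix.tail_cons, Matrix.cons_val_three]
        ring
      · intro i _
        fin_cases i
        · simpa using subset_convexHull ℝ S hu_mem
        · simpa using subset_convexHull ℝ S hv_mem
        · simpa using subset_convexHull ℝ S hg_mem
        · simpa using subset_convexHull ℝ S h0_mem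
    rw [Fin.sum_univ_four] at hmem
    simp only [Matrix.cons_val_zero, Matrix.cons_val_one, Matrix.head_cons,
      Matrix.cons_val_two, Matrix.tail_cons, Matrix.cons_val_three] at hmem
    rwa [key] at hmem
  apply Set.Subset.antisymm
  · -- unit ball ⊆ closure of the hull
    intro p hp
    simp only [Set.mem_setOf_eq] at hp
    rw [Metric.mem_closure_iff]
    intro δ hδ
    have hpn : (0 : ℝ) < ‖p‖ + 1 := by positivity
    set m : ℝ := min (1 / 2) (δ / (2 * (‖p‖ + 1))) with hm
    have hm0 : 0 < m := lt_min (by norm_num) (by positivity)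
    have hm2 : m ≤ 1 / 2 := min_le_left _ _
    set t : ℝ := 1 - m with ht
    have ht0 : 0 < t := by rw [ht]; linarith
    have ht1 : t < 1 := by rw [ht]; linarith
    refine ⟨t • p, ?_, ?_⟩
    · apply hullA
      have h1t : 1 < t⁻¹ := (one_lt_inv₀ ht0).mpr ht1
      have hlt : sInf (T p) < t⁻¹ := lt_of_le_of_lt ((hNT p) ▸ hp) h1t
      obtain ⟨r, hrT, hr⟩ := exists_lt_of_csInf_lt (hTne p) hlt
      rw [hTmem] at hrT
      obtain ⟨w, rfl⟩ := hrT
      have hle := hNle (t • p) (t • w)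
      have e1 : ‖(t • p).1 - t • w‖ = t * ‖p.1 - w‖ := by
        rw [Prod.smul_fst, ← smul_sub, norm_smul, Real.norm_eq_abs, abs_of_pos ht0]
      have e2 : ‖(t • p).2 + f (t • w)‖ = t * ‖p.2 + f w‖ := by
        rw [Prod.smul_snd, map_smul, ← smul_add, norm_smul, Real.norm_eq_abs, abs_of_pos ht0]
      have e3 : ε * ‖t • w‖ = t * (ε * ‖w‖) := by
        rw [norm_smul, Real.norm_eq_abs, abs_of_pos ht0]; ring
      rw [e1, e2, e3] at hle
      calc N (t • p) ≤ t * ‖p.1 - w‖ + t * ‖p.2 + f w‖ + t * (ε * ‖w‖) := hle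
        _ = t * (‖p.1 - w‖ + ‖p.2 + f w‖ + ε * ‖w‖) := by ring
        _ < t * t⁻¹ := by exact mul_lt_mul_of_pos_left hr ht0
        _ = 1 := mul_inv_cancel₀ (ne_of_gt ht0)
    · rw [dist_eq_norm]
      have hsub : p - t • p = m • p := by
        rw [ht, sub_smul, one_smul]
        abel
      rw [hsub, norm_smul, Real.norm_eq_abs, abs_of_pos hm0]
      have hmδ : m ≤ δ / (2 * (‖p‖ + 1)) := min_le_right _ _
      have h1 : m * ‖p‖ ≤ δ / (2 * (‖p‖ + 1)) * ‖p‖ :=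
        mul_le_mul_of_nonneg_right hmδ (norm_nonneg p)
      have h2 : δ / (2 * (‖p‖ + 1)) * ‖p‖ < δ := by
        rw [div_mul_eq_mul_div, div_lt_iff₀ (by positivity)]
        nlinarith [norm_nonneg p]
      linarith
  · -- closure of hull ⊆ unit ball
    have hsub : S ⊆ {p : X × Y | N p ≤ 1} := by
      rintro p hpS
      rw [hS] at hpS
      rcases hpS with (⟨x, hx, rfl⟩ | ⟨y, hy, rfl⟩) | ⟨w, hw, rfl⟩
      · rw [Metric.mem_closedBall, dist_zero_right] at hx
        have h := hNle (x, (0 : Y)) 0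
        simp only [map_zero, sub_zero, add_zero, norm_zero, mul_zero] at h
        exact le_trans h hx
      · rw [Metric.mem_closedBall, dist_zero_right] at hy
        have h := hNle ((0 : X), y) 0
        simp only [map_zero, sub_zero, add_zero, norm_zero, mul_zero, zero_add] at h
        exact le_trans h hy
      · have h := hNle (w, -f w) w
        simp only [sub_self, neg_add_cancel, norm_zero, zero_add, add_zero] at h
        refine le_trans h ?_
        calc ε * ‖w‖ ≤ ε * ε⁻¹ := mul_le_mul_of_nonneg_left hw (le_of_lt hε0)
          _ = 1 := mul_inv_cancel₀ (ne_of_gt hε0)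
    have hconv : Convex ℝ {p : X × Y | N p ≤ 1} := by
      intro p hp q hq s t hs htn hst
      simp only [Set.mem_setOf_eq] at hp hq ⊢
      refine le_of_forall_pos_le_add ?_
      intro δ hδ
      have hp' : sInf (T p) < 1 + δ := lt_of_le_of_lt ((hNT p) ▸ hp) (by linarith)
      obtain ⟨r1, hr1T, hr1⟩ := exists_lt_of_csInf_lt (hTne p) hp'
      rw [hTmem] at hr1T
      obtain ⟨w1, rfl⟩ := hr1T
      have hq' : sInf (T q) < 1 + δ := lt_of_le_of_lt ((hNT q) ▸ hq) (by linarith)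
      obtain ⟨r2, hr2T, hr2⟩ := exists_lt_of_csInf_lt (hTne q) hq'
      rw [hTmem] at hr2T
      obtain ⟨w2, rfl⟩ := hr2T
      have hle := hNle (s • p + t • q) (s • w1 + t • w2)
      have e1 : (s • p + t • q).1 - (s • w1 + t • w2) = s • (p.1 - w1) + t • (q.1 - w2) := by
        simp only [Prod.fst_add, Prod.smul_fst, smul_sub]
        abel
      have e2 : (s • p + t • q).2 + f (s • w1 + t • w2)
          = s • (p.2 + f w1) + t • (q.2 + f w2) := by
        simp only [Prod.snd_add, Prod.smul_snd, map_add, map_smul, smul_add]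
        abel
      rw [e1, e2] at hle
      have n1 : ‖s • (p.1 - w1) + t • (q.1 - w2)‖ ≤ s * ‖p.1 - w1‖ + t * ‖q.1 - w2‖ := by
        calc _ ≤ ‖s • (p.1 - w1)‖ + ‖t • (q.1 - w2)‖ := norm_add_le _ _
          _ = s * ‖p.1 - w1‖ + t * ‖q.1 - w2‖ := by
            rw [norm_smul, norm_smul, Real.norm_eq_abs, Real.norm_eq_abs,
              abs_of_nonneg hs, abs_of_nonneg htn]
      have n2 : ‖s • (p.2 + f w1) + t • (q.2 + f w2)‖
          ≤ s * ‖p.2 + f w1‖ + t * ‖q.2 + f w2‖ := by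
        calc _ ≤ ‖s • (p.2 + f w1)‖ + ‖t • (q.2 + f w2)‖ := norm_add_le _ _
          _ = s * ‖p.2 + f w1‖ + t * ‖q.2 + f w2‖ := by
            rw [norm_smul, norm_smul, Real.norm_eq_abs, Real.norm_eq_abs,
              abs_of_nonneg hs, abs_of_nonneg htn]
      have n3 : ‖s • w1 + t • w2‖ ≤ s * ‖w1‖ + t * ‖w2‖ := by
        calc _ ≤ ‖s • w1‖ + ‖t • w2‖ := norm_add_le _ _
          _ = s * ‖w1‖ + t * ‖w2‖ := by
            rw [norm_smul, norm_smul, Real.norm_eq_abs, Real.norm_eq_abs,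
              abs_of_nonneg hs, abs_of_nonneg htn]
      have n3' : ε * ‖s • w1 + t • w2‖ ≤ ε * (s * ‖w1‖ + t * ‖w2‖) :=
        mul_le_mul_of_nonneg_left n3 (le_of_lt hε0)
      have hb1 : s * (‖p.1 - w1‖ + ‖p.2 + f w1‖ + ε * ‖w1‖) ≤ s * (1 + δ) :=
        mul_le_mul_of_nonneg_left (le_of_lt hr1) hs
      have hb2 : t * (‖q.1 - w2‖ + ‖q.2 + f w2‖ + ε * ‖w2‖) ≤ t * (1 + δ) :=
        mul_le_mul_of_nonneg_left (le_of_lt hr2) htn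
      nlinarith [hle, n1, n2, n3', hb1, hb2]
    have hlip : ∀ p q : X × Y, N p ≤ N q + (‖p.1 - q.1‖ + ‖p.2 - q.2‖) := by
      intro p q
      rw [hNT p, hNT q, ← sub_le_iff_le_add]
      apply le_csInf (hTne q)
      rintro r hrT
      rw [hTmem] at hrT
      obtain ⟨w, rfl⟩ := hrT
      rw [sub_le_iff_le_add]
      have t1 : ‖p.1 - w‖ ≤ ‖q.1 - w‖ + ‖p.1 - q.1‖ := by
        calc ‖p.1 - w‖ = ‖(q.1 - w) + (p.1 - q.1)‖ := by
              rw [show p.1 - w = (q.1 - w) + (p.1 - q.1) from by abel]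
          _ ≤ _ := norm_add_le _ _
      have t2 : ‖p.2 + f w‖ ≤ ‖q.2 + f w‖ + ‖p.2 - q.2‖ := by
        calc ‖p.2 + f w‖ = ‖(q.2 + f w) + (p.2 - q.2)‖ := by
              rw [show p.2 + f w = (q.2 + f w) + (p.2 - q.2) from by abel]
          _ ≤ _ := norm_add_le _ _
      have hi := csInf_le (hTbdd p) (⟨w, rfl⟩ : _ ∈ T p)
      linarith
    have hcont : Continuous N := by
      have : LipschitzWith 2 N := by
        apply LipschitzWith.of_dist_le_mul
        intro p q
        have hpq1 : ‖p.1 - q.1‖ ≤ dist p q := by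
          rw [← dist_eq_norm, Prod.dist_eq]
          exact le_max_left _ _
        have hpq2 : ‖p.2 - q.2‖ ≤ dist p q := by
          rw [← dist_eq_norm, Prod.dist_eq]
          exact le_max_right _ _
        have A := hlip p q
        have B := hlip q p
        rw [norm_sub_rev q.1 p.1, norm_sub_rev q.2 p.2] at B
        rw [Real.dist_eq]
        have hc2 : ((2 : NNReal) : ℝ) = 2 := by norm_num
        rw [hc2]
        rw [abs_sub_le_iff]
        constructor <;> linarith
      exact this.continuous
    have hclosed : IsClosed {p : X × Y | N p ≤ 1} :=
      isClosed_le hcont continuous_const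
    exact closure_minimal (convexHull_min hsub hconv) hclosed
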